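/- Let A : P → ℝ^{d×d} with A(ρ) Metzler for each ρ, and suppose A is monotone in the sense that A(ρ_dg, ρ_ct, ρ_cv) ≤ A(ρ_dg⁻, ρ_ct⁺, ρ_cv) =: A⁺(ρ_cv) entrywise for all (ρ_dg, ρ_ct, ρ_cv) in the box P = [ρ_dg⁻, ρ_dg⁺] × [ρ_ct⁻, ρ_ct⁺] × P_cv. Then A(ρ) is Hurwitz stable for all ρ ∈ P if and only if A⁺(ρ_cv) is Hurwitz stable for all ρ_cv ∈ P_cv. -/

import Mathlib

open Matrix
open scoped NNReal ENNReal Pointwise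
attribute [local instance] Matrix.linftyOpNormedRing Matrix.linftyOpNormedAlgebra

def Metzler {d : ℕ} (M : Matrix (Fin d) (Fin d) ℝ) : Prop :=
  ∀ i j, i ≠ j → 0 ≤ M i j

def HurwitzStable {d : ℕ} (M : Matrix (Fin d) (Fin d) ℝ) : Prop :=
  ∀ μ ∈ spectrum ℂ (M.map Complex.ofReal), μ.re < 0

lemma metzler_hurwitz_of_le {d : ℕ} (M N : Matrix (Fin d) (Fin d) ℝ)
    (hM : Metzler M) (hle : ∀ i j, M i j ≤ N i j) (hN : HurwitzStable N) :
    HurwitzStable M := by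
  intro μ hμ
  by_contra hre
  push_neg at hre
  -- spectrum of N
  have hSfin : (spectrum ℂ (N.map Complex.ofReal)).Finite := Matrix.finite_spectrum _
  set S : Finset ℂ := hSfin.toFinset with hS
  -- choose the shift s
  set s : ℝ := 1 + ∑ i, |M i i| + ∑ l ∈ S, ‖l‖ ^ 2 / (2 * (-l.re)) with hsdef
  have hterm1 : (0:ℝ) ≤ ∑ i, |M i i| := Finset.sum_nonneg fun i _ => abs_nonneg _
  have hterm2 : ∀ l ∈ S, (0:ℝ) ≤ ‖l‖ ^ 2 / (2 * (-l.re)) := by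
    intro l hl
    have hlre : l.re < 0 := hN l (hSfin.mem_toFinset.mp hl)
    have : (0:ℝ) < 2 * (-l.re) := by linarith
    positivity
  have hs0 : (0:ℝ) < s := by
    have := Finset.sum_nonneg hterm2
    simp only [hsdef]; linarith
  have hsM : ∀ i, 0 ≤ M i i + s := by
    intro i
    have h1 : |M i i| ≤ ∑ j, |M j j| :=
      Finset.single_le_sum (fun j _ => abs_nonneg (M j j)) (Finset.mem_univ i)
    have h2 : -M i i ≤ |M i i| := neg_le_abs _
    have := Finset.sum_nonneg hterm2
    simp only [hsdef]; linarith
  have hsS : ∀ l ∈ spectrum ℂ (N.map Complex.ofReal), ‖l + (s:ℂ)‖ < s := by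
    intro l hl
    have hlre : l.re < 0 := hN l hl
    have hlS : l ∈ S := hSfin.mem_toFinset.mpr hl
    have hbig : ‖l‖ ^ 2 / (2 * (-l.re)) < s := by
      have h1 : ‖l‖ ^ 2 / (2 * (-l.re)) ≤ ∑ l' ∈ S, ‖l'‖ ^ 2 / (2 * (-l'.re)) :=
        Finset.single_le_sum hterm2 hlS
      simp only [hsdef]; linarith
    have hsq : ‖l + (s:ℂ)‖ ^ 2 < s ^ 2 := by
      have habs : ‖l + (s:ℂ)‖ ^ 2 = (l.re + s) ^ 2 + l.im ^ 2 := by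
        rw [Complex.sq_norm, Complex.normSq_apply]
        simp [pow_two]
      have hnrm : ‖l‖ ^ 2 = l.re ^ 2 + l.im ^ 2 := by
        rw [Complex.sq_norm, Complex.normSq_apply]; ring
      have h2 : ‖l‖ ^ 2 < 2 * (-l.re) * s := by
        rw [div_lt_iff₀ (by linarith : 0 < 2 * (-l.re))] at hbig
        linarith
      rw [habs]; nlinarith
    have := abs_lt_of_sq_lt_sq hsq hs0.le
    rwa [abs_of_nonneg (norm_nonneg _)] at this
  -- eigenvector of M
  obtain ⟨v, hv0, hvEig⟩ : ∃ v : Fin d → ℂ, v ≠ 0 ∧ (M.map Complex.ofReal).mulVec v = μ • v := by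
    rw [← AlgEquiv.spectrum_eq (Matrix.toLinAlgEquiv' :
      Matrix (Fin d) (Fin d) ℂ ≃ₐ[ℂ] _)] at hμ
    rw [← Module.End.hasEigenvalue_iff_mem_spectrum] at hμ
    obtain ⟨v, hv⟩ := hμ.exists_hasEigenvector
    exact ⟨v, hv.2, hv.apply_eq_smul⟩
  set w : Fin d → ℝ := fun i => ‖v i‖ with hw
  have hw0 : ∀ i, 0 ≤ w i := fun i => norm_nonneg _
  obtain ⟨i₀, hvi₀⟩ : ∃ i, v i ≠ 0 := Function.ne_iff.mp hv0
  obtain ⟨i₁, -, hi₁⟩ := Finset.exists_max_image Finset.univ w ⟨i₀, Finset.mem_univ i₀⟩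
  have hi₁' : ∀ i, w i ≤ w i₁ := fun i => hi₁ i (Finset.mem_univ i)
  have hwi₁ : 0 < w i₁ :=
    lt_of_lt_of_le (by simpa [hw] using norm_pos_iff.mpr hvi₀) (hi₁' i₀)
  -- shifted matrices
  set R : Matrix (Fin d) (Fin d) ℝ := N + s • 1 with hR
  have hRapp : ∀ i j, R i j = N i j + (if i = j then s else 0) := by
    intro i j
    simp [hR, Matrix.one_apply, mul_ite]
  have hM'le : ∀ i j, M i j + (if i = j then s else 0) ≤ R i j := by
    intro i j; rw [hRapp]; exact add_le_add (hle i j) le_rfl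
  have hM'0 : ∀ i j, 0 ≤ M i j + (if i = j then s else 0) := by
    intro i j
    by_cases h : i = j
    · subst h; simpa using hsM i
    · simpa [h] using hM i j h
  have hR0 : ∀ i j, 0 ≤ R i j := fun i j => le_trans (hM'0 i j) (hM'le i j)
  set t : ℝ := ‖μ + (s:ℂ)‖ with htdef
  have hst : s ≤ t := by
    have h1 : (μ + s).re ≤ ‖μ + (s:ℂ)‖ := Complex.re_le_norm _
    have h2 : (μ + s).re = μ.re + s := by simp
    simp only [htdef]; linarith
  have ht0 : 0 < t := lt_of_lt_of_le hs0 hst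
  -- the basic subinvariance inequality
  have step1 : ∀ i, t * w i ≤ (R *ᵥ w) i := by
    intro i
    have heig : ∑ j, (M i j : ℂ) * v j = μ * v i := by
      have := congrFun hvEig i
      simpa [Matrix.mulVec, dotProduct, Matrix.map_apply] using this
    have hkey : (μ + s) * v i = ∑ j, ((M i j + (if i = j then s else 0) : ℝ) : ℂ) * v j := by
      have e : ∀ j, ((M i j + (if i = j then s else 0) : ℝ) : ℂ) * v j
          = (M i j : ℂ) * v j + (if i = j then (s : ℂ) * v j else 0) := by
        intro j
        by_cases h : i = j <;> simp only [h, if_true, if_false] <;> push_cast <;> ring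
      rw [Finset.sum_congr rfl fun j _ => e j, Finset.sum_add_distrib, heig,
        Finset.sum_ite_eq, if_pos (Finset.mem_univ i)]
      ring
    calc t * w i = ‖(μ + s) * v i‖ := by
          simp [htdef, hw, norm_mul]
      _ = ‖∑ j, ((M i j + (if i = j then s else 0) : ℝ) : ℂ) * v j‖ := by
          rw [hkey]
      _ ≤ ∑ j, ‖((M i j + (if i = j then s else 0) : ℝ) : ℂ) * v j‖ := by
          exact norm_sum_le _ _
      _ = ∑ j, (M i j + (if i = j then s else 0)) * w j := by
          refine Finset.sum_congr rfl fun j _ => ?_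
          simp only [norm_mul, Complex.norm_real, Real.norm_eq_abs, hw, abs_of_nonneg (hM'0 i j)]
      _ ≤ ∑ j, R i j * w j :=
          Finset.sum_le_sum fun j _ => mul_le_mul_of_nonneg_right (hM'le i j) (hw0 j)
      _ = (R *ᵥ w) i := by simp [Matrix.mulVec, dotProduct]
  have hmono : ∀ (x y : Fin d → ℝ), (∀ j, x j ≤ y j) → ∀ i, (R *ᵥ x) i ≤ (R *ᵥ y) i := by
    intro x y hxy i
    simp only [Matrix.mulVec, dotProduct]
    exact Finset.sum_le_sum fun j _ => mul_le_mul_of_nonneg_left (hxy j) (hR0 i j)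
  have stepn : ∀ n : ℕ, ∀ i, t ^ n * w i ≤ ((R ^ n) *ᵥ w) i := by
    intro n
    induction n with
    | zero => intro i; simp [Matrix.one_mulVec]
    | succ n ih =>
        intro i
        have h1 : ((R ^ (n+1)) *ᵥ w) i = (R *ᵥ ((R ^ n) *ᵥ w)) i := by
          rw [Matrix.mulVec_mulVec, ← pow_succ']
        have h2 : (R *ᵥ (fun j => t ^ n * w j)) i ≤ (R *ᵥ ((R ^ n) *ᵥ w)) i :=
          hmono _ _ ih i
        have h3 : (R *ᵥ (fun j => t ^ n * w j)) i = t ^ n * (R *ᵥ w) i := by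
          simp only [Matrix.mulVec, dotProduct, Finset.mul_sum]
          exact Finset.sum_congr rfl fun j _ => by ring
        have h4 : t ^ (n+1) * w i ≤ t ^ n * (R *ᵥ w) i := by
          rw [pow_succ]
          calc t ^ n * t * w i = t ^ n * (t * w i) := by ring
            _ ≤ t ^ n * (R *ᵥ w) i :=
              mul_le_mul_of_nonneg_left (step1 i) (pow_nonneg ht0.le n)
        rw [h1]; exact h4.trans (h3 ▸ h2)
  -- pass to norms
  set Rc : Matrix (Fin d) (Fin d) ℂ := R.map Complex.ofReal with hRc
  have hpowmap : ∀ n : ℕ, Rc ^ n = (R ^ n).map Complex.ofReal := by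
    intro n
    rw [hRc]
    exact (map_pow (Complex.ofRealHom.mapMatrix) R n).symm
  have hnorm : ∀ n : ℕ, t ^ n ≤ ‖Rc ^ n‖ := by
    intro n
    have h1 : t ^ n * w i₁ ≤ ((R ^ n) *ᵥ w) i₁ := stepn n i₁
    have h2 : ((R ^ n) *ᵥ w) i₁ ≤ (∑ j, |(R ^ n) i₁ j|) * w i₁ := by
      simp only [Matrix.mulVec, dotProduct, Finset.sum_mul]
      refine Finset.sum_le_sum fun j _ => ?_
      calc (R ^ n) i₁ j * w j ≤ |(R ^ n) i₁ j| * w j :=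
            mul_le_mul_of_nonneg_right (le_abs_self _) (hw0 j)
        _ ≤ |(R ^ n) i₁ j| * w i₁ :=
            mul_le_mul_of_nonneg_left (hi₁' j) (abs_nonneg _)
    have h3 : t ^ n ≤ ∑ j, |(R ^ n) i₁ j| :=
      le_of_mul_le_mul_right (h1.trans h2) hwi₁
    have h4 : ∑ j, ‖(Rc ^ n) i₁ j‖ ≤ ‖Rc ^ n‖ := by
      have h4' : (∑ j, ‖(Rc ^ n) i₁ j‖₊ : ℝ≥0) ≤ ‖Rc ^ n‖₊ := by
        rw [Matrix.linfty_opNNNorm_def]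
        exact Finset.le_sup (f := fun i => ∑ j, ‖(Rc ^ n) i j‖₊) (Finset.mem_univ i₁)
      simpa [NNReal.coe_sum, coe_nnnorm] using NNReal.coe_le_coe.mpr h4'
    have h5 : ∑ j, |(R ^ n) i₁ j| = ∑ j, ‖(Rc ^ n) i₁ j‖ := by
      refine Finset.sum_congr rfl fun j _ => ?_
      rw [hpowmap n, Matrix.map_apply, Complex.norm_real, Real.norm_eq_abs]
    exact h3.trans (h5 ▸ h4)
  -- Gelfand's formula gives a lower bound on the spectral radius
  have hnorm' : ∀ n : ℕ, t.toNNReal ^ n ≤ ‖Rc ^ n‖₊ := by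
    intro n
    rw [← Real.toNNReal_pow ht0.le]
    exact Real.toNNReal_le_iff_le_coe.mpr (by simpa [coe_nnnorm] using hnorm n)
  have hts : (t.toNNReal : ℝ≥0∞) ≤ spectralRadius ℂ Rc := by
    refine ge_of_tendsto (spectrum.pow_nnnorm_pow_one_div_tendsto_nhds_spectralRadius Rc) ?_
    filter_upwards [Filter.eventually_ge_atTop 1] with n hn
    have h1 : ((t.toNNReal : ℝ≥0∞) ^ n) ^ (1 / (n:ℝ)) ≤ ((‖Rc ^ n‖₊ : ℝ≥0∞)) ^ (1 / (n:ℝ)) := by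
      refine ENNReal.rpow_le_rpow ?_ (by positivity)
      exact_mod_cast hnorm' n
    have h2 : ((t.toNNReal : ℝ≥0∞) ^ n) ^ (1 / (n:ℝ)) = (t.toNNReal : ℝ≥0∞) := by
      rw [← ENNReal.rpow_natCast, ← ENNReal.rpow_mul,
        mul_one_div_cancel (by exact_mod_cast Nat.one_le_iff_ne_zero.mp hn), ENNReal.rpow_one]
    rw [← h2]
    exact h1
  -- upper bound on the spectral radius from the spectrum of N
  have hspecRc : spectrum ℂ Rc = ({(s : ℂ)} : Set ℂ) + spectrum ℂ (N.map Complex.ofReal) := by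
    have h1 : Rc = (algebraMap ℂ (Matrix (Fin d) (Fin d) ℂ)) s + N.map Complex.ofReal := by
      rw [Algebra.algebraMap_eq_smul_one]
      ext i j
      simp only [hRc, hR, Matrix.map_apply, Matrix.add_apply, Matrix.smul_apply,
        Matrix.one_apply, smul_eq_mul, mul_ite, mul_one, mul_zero, Complex.ofReal_add,
        apply_ite Complex.ofReal, Complex.ofReal_zero, Matrix.smul_apply]
      ring
    rw [h1]
    exact (spectrum.singleton_add_eq _ _).symm
  set c : ℝ≥0 := S.sup (fun l => ‖l + (s : ℂ)‖₊) with hc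
  have hcs : c < s.toNNReal := by
    rcases S.eq_empty_or_nonempty with hSe | hSne
    · simp only [hc, hSe, Finset.sup_empty]
      exact_mod_cast (by simpa using hs0 : (0:ℝ) < s.toNNReal)
    · rw [hc, Finset.sup_lt_iff (by simpa using hs0 : ⊥ < s.toNNReal)]
      intro l hl
      have := hsS l (hSfin.mem_toFinset.mp hl)
      rw [← NNReal.coe_lt_coe, coe_nnnorm, Real.coe_toNNReal _ hs0.le]
      simpa using this
  have hupper : spectralRadius ℂ Rc ≤ (c : ℝ≥0∞) := by
    rw [spectralRadius]
    refine iSup₂_le fun κ hκ => ?_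
    rw [hspecRc] at hκ
    obtain ⟨a, ha, b, hb, rfl⟩ := Set.mem_add.mp hκ
    rw [Set.mem_singleton_iff] at ha
    subst ha
    have hbS : b ∈ S := hSfin.mem_toFinset.mpr hb
    have : ‖b + (s:ℂ)‖₊ ≤ c := Finset.le_sup (f := fun l => ‖l + (s : ℂ)‖₊) hbS
    exact_mod_cast (by rwa [add_comm] at this : ‖(s:ℂ) + b‖₊ ≤ c)
  -- contradiction
  have h1 : (t.toNNReal : ℝ≥0∞) ≤ (c : ℝ≥0∞) := hts.trans hupper
  have h2 : t.toNNReal ≤ c := by exact_mod_cast h1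
  have h3 : s.toNNReal ≤ t.toNNReal := Real.toNNReal_le_toNNReal hst
  exact absurd (h3.trans h2) (not_le.mpr hcs)

theorem stmt8 {ndg nct ncv d : ℕ}
    (A : (Fin ndg → ℝ) → (Fin nct → ℝ) → (Fin ncv → ℝ) → Matrix (Fin d) (Fin d) ℝ)
    (dglo dghi : Fin ndg → ℝ) (ctlo cthi : Fin nct → ℝ) (Pcv : Set (Fin ncv → ℝ))
    (hdg : dglo ≤ dghi) (hct : ctlo ≤ cthi)
    (hMetz : ∀ ρdg ∈ Set.Icc dglo dghi, ∀ ρct ∈ Set.Icc ctlo cthi, ∀ ρcv ∈ Pcv,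
      Metzler (A ρdg ρct ρcv))
    (hmono : ∀ ρdg ∈ Set.Icc dglo dghi, ∀ ρct ∈ Set.Icc ctlo cthi, ∀ ρcv ∈ Pcv,
      ∀ i j, A ρdg ρct ρcv i j ≤ A dglo cthi ρcv i j) :
    (∀ ρdg ∈ Set.Icc dglo dghi, ∀ ρct ∈ Set.Icc ctlo cthi, ∀ ρcv ∈ Pcv,
        HurwitzStable (A ρdg ρct ρcv)) ↔
      (∀ ρcv ∈ Pcv, HurwitzStable (A dglo cthi ρcv)) := by
  constructor
  · intro h ρcv hcv
    exact h dglo (Set.left_mem_Icc.mpr hdg) cthi (Set.right_mem_Icc.mpr hct) ρcv hcv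
  · intro h ρdg hρdg ρct hρct ρcv hcv
    exact metzler_hurwitz_of_le _ _ (hMetz ρdg hρdg ρct hρct ρcv hcv)
      (hmono ρdg hρdg ρct hρct ρcv hcv) (h ρcv hcv)
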